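/- For every initial configuration X_0 ∈ C, every request sequence ρ = (r_1, …, r_t), and every WFA trajectory X_0, X_1, …, X_t for ρ, one has OPT(ρ) + WFA(ρ) ≤ Σ_{i=0}^{t−1} ∇(w_i, r_{i+1}), where w_0(X) = d(X_0, X) and w_i = T_{r_i}(w_{i−1}). -/

import Mathlib

open scoped BigOperators

/-- A configuration: a multiset of `k` points of `M`. -/
abbrev Conf (M : Type*) (k : ℕ) := Sym M k

/-- Minimum matching cost between two configurations: the minimum over enumerations
of the two multisets of the sum of pointwise distances. -/
noncomputable def confDist {M : Type*} [MetricSpace M] {k : ℕ} (X Y : Conf M k) : ℝ :=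
  sInf { c : ℝ | ∃ u v : Fin k → M,
    ((List.ofFn u : List M) : Multiset M) = (X : Multiset M) ∧
    ((List.ofFn v : List M) : Multiset M) = (Y : Multiset M) ∧
    c = ∑ i, dist (u i) (v i) }

/-- The work-function update operator `T_r`. -/
noncomputable def wfUpdate {M : Type*} [MetricSpace M] {k : ℕ}
    (w : Conf M k → ℝ) (r : M) (X : Conf M k) : ℝ :=
  sInf { c : ℝ | ∃ Y : Conf M k, r ∈ Y ∧ c = w Y + confDist X Y }

/-- The extended cost `∇(w, r)`. -/
noncomputable def extCost {M : Type*} [MetricSpace M] {k : ℕ}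
    (w : Conf M k → ℝ) (r : M) : ℝ :=
  sSup { c : ℝ | ∃ X : Conf M k, c = wfUpdate w r X - w X }

/-- The OPT increase `ΔOPT(w, r)`. -/
noncomputable def optIncrease {M : Type*} [MetricSpace M] {k : ℕ}
    (w : Conf M k → ℝ) (r : M) : ℝ :=
  sInf (Set.range (wfUpdate w r)) - sInf (Set.range w)

/-- The normalized work function `ŵ = w - (min w)·1`. -/
noncomputable def normWF {M : Type*} [MetricSpace M] {k : ℕ}
    (w : Conf M k → ℝ) : Conf M k → ℝ :=
  fun X => w X - sInf (Set.range w)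

/-- `w` is 1-Lipschitz with respect to the matching distance on configurations. -/
def LipschitzWF {M : Type*} [MetricSpace M] {k : ℕ} (w : Conf M k → ℝ) : Prop :=
  ∀ X Y : Conf M k, |w X - w Y| ≤ confDist X Y

/-- The initial work function `w₀(X) = d(X₀, X)` for initial configuration `X₀`. -/
noncomputable def initWF {M : Type*} [MetricSpace M] {k : ℕ} (X₀ : Conf M k) :
    Conf M k → ℝ :=
  fun X => confDist X₀ X

/-- The work function `w_i` after serving the first `i` requests of the sequence `ρ`,
starting from `w₀ = d(X₀, ·)`. -/
noncomputable def wfAt {M : Type*} [MetricSpace M] {k : ℕ} (X₀ : Conf M k)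
    (ρ : List M) (i : ℕ) : Conf M k → ℝ :=
  (ρ.take i).foldl (fun w r => wfUpdate w r) (initWF X₀)

/-- `Xs` is a trajectory of the Work Function Algorithm for the request sequence `ρ`
started at `X₀`: `Xs 0 = X₀` and, for each `i < |ρ|`, the configuration `Xs (i+1)`
contains the request `ρ.get i` and minimizes `w_{i+1}(Y) + d(X_i, Y)` over all
configurations `Y` containing the request. -/
def IsWFATrajectory {M : Type*} [MetricSpace M] {k : ℕ} (X₀ : Conf M k) (ρ : List M)
    (Xs : ℕ → Conf M k) : Prop :=
  Xs 0 = X₀ ∧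
  ∀ i : Fin ρ.length,
    ρ.get i ∈ Xs (↑i + 1) ∧
    wfAt X₀ ρ (↑i + 1) (Xs (↑i + 1)) + confDist (Xs ↑i) (Xs (↑i + 1)) =
      sInf { c : ℝ | ∃ Y : Conf M k, ρ.get i ∈ Y ∧
        c = wfAt X₀ ρ (↑i + 1) Y + confDist (Xs ↑i) Y }

/-- The online cost of the trajectory `Xs` on `ρ`: `WFA(ρ) = Σ_{i<t} d(X_i, X_{i+1})`. -/
noncomputable def WFACost {M : Type*} [MetricSpace M] {k : ℕ} (ρ : List M)
    (Xs : ℕ → Conf M k) : ℝ :=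
  ∑ i : Fin ρ.length, confDist (Xs ↑i) (Xs (↑i + 1))

/-- The offline optimum `OPT(ρ) = min_X w_t(X)`. -/
noncomputable def OPTCost {M : Type*} [MetricSpace M] {k : ℕ} (X₀ : Conf M k)
    (ρ : List M) : ℝ :=
  sInf (Set.range (wfAt X₀ ρ ρ.length))


section AuxLemmas
set_option linter.unusedSectionVars false

variable {M : Type*} [MetricSpace M] {k : ℕ}

lemma exists_ofFn_eq (X : Conf M k) :
    ∃ u : Fin k → M, ((List.ofFn u : List M) : Multiset M) = (X : Multiset M) := by
  obtain ⟨l, hl⟩ := Quotient.exists_rep (X : Multiset M)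
  have hl' : (l : Multiset M) = (X : Multiset M) := hl
  have hlen : l.length = k := by
    have h2 : Multiset.card (X : Multiset M) = k := X.2
    rw [← hl'] at h2
    simpa using h2
  refine ⟨fun i => l.get (Fin.cast hlen.symm i), ?_⟩
  have : List.ofFn (fun i : Fin k => l.get (Fin.cast hlen.symm i)) = l := by
    apply List.ext_get
    · simp [hlen]
    · intro n h1 h2
      simp
  rw [this, hl']

lemma confDist_self (X : Conf M k) : confDist X X = 0 := by
  obtain ⟨u, hu⟩ := exists_ofFn_eq X
  have hmem : (0:ℝ) ∈ { c : ℝ | ∃ u v : Fin k → M,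
      ((List.ofFn u : List M) : Multiset M) = (X : Multiset M) ∧
      ((List.ofFn v : List M) : Multiset M) = (X : Multiset M) ∧
      c = ∑ i, dist (u i) (v i) } := ⟨u, u, hu, hu, by simp⟩
  have hlb : ∀ c ∈ { c : ℝ | ∃ u v : Fin k → M,
      ((List.ofFn u : List M) : Multiset M) = (X : Multiset M) ∧
      ((List.ofFn v : List M) : Multiset M) = (X : Multiset M) ∧
      c = ∑ i, dist (u i) (v i) }, (0:ℝ) ≤ c := by
    rintro c ⟨u, v, -, -, rfl⟩
    positivity
  exact le_antisymm (csInf_le ⟨0, hlb⟩ hmem) (le_csInf ⟨0, hmem⟩ hlb)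

lemma bddBelow_aux [Fintype M] (g : Conf M k → ℝ) (P : Conf M k → Prop) :
    BddBelow {c : ℝ | ∃ Y : Conf M k, P Y ∧ c = g Y} := by
  haveI := Classical.decEq M
  refine Set.Finite.bddBelow (Set.Finite.subset (Set.finite_range g) ?_)
  rintro c ⟨Y, -, rfl⟩
  exact ⟨Y, rfl⟩

lemma wfUpdate_le [Fintype M] (w : Conf M k → ℝ) (r : M) (X Y : Conf M k) (hr : r ∈ Y) :
    wfUpdate w r X ≤ w Y + confDist X Y :=
  csInf_le (bddBelow_aux (fun Y => w Y + confDist X Y) (fun Y => r ∈ Y)) ⟨Y, hr, rfl⟩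

lemma wfUpdate_le_self [Fintype M] (w : Conf M k → ℝ) (r : M) (Y : Conf M k) (hr : r ∈ Y) :
    wfUpdate w r Y ≤ w Y := by
  have := wfUpdate_le w r Y Y hr
  rwa [confDist_self, add_zero] at this

lemma sub_le_extCost [Fintype M] (w : Conf M k → ℝ) (r : M) (X : Conf M k) :
    wfUpdate w r X - w X ≤ extCost w r := by
  haveI := Classical.decEq M
  refine le_csSup ?_ ⟨X, rfl⟩
  refine Set.Finite.bddAbove (Set.Finite.subset
    (Set.finite_range (fun X => wfUpdate w r X - w X)) ?_)
  rintro c ⟨Y, rfl⟩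
  exact ⟨Y, rfl⟩

lemma wfAt_succ (X₀ : Conf M k) (ρ : List M) (n : ℕ) (hn : n < ρ.length) :
    wfAt X₀ ρ (n+1) = wfUpdate (wfAt X₀ ρ n) (ρ.get ⟨n, hn⟩) := by
  unfold wfAt
  rw [List.take_succ, List.getElem?_eq_getElem hn]
  simp only [Option.toList_some, List.foldl_append, List.foldl_cons, List.foldl_nil,
    List.get_eq_getElem]

lemma wfa_step [Fintype M] (hk : 0 < k) (X₀ : Conf M k) (ρ : List M) (Xs : ℕ → Conf M k)
    (hXs : IsWFATrajectory X₀ ρ Xs) (i : Fin ρ.length) :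
    wfAt X₀ ρ (↑i+1) (Xs (↑i+1)) + confDist (Xs ↑i) (Xs (↑i+1)) ≤
      wfAt X₀ ρ ↑i (Xs ↑i) + extCost (wfAt X₀ ρ ↑i) (ρ.get i) := by
  obtain ⟨-, hmin⟩ := hXs
  obtain ⟨-, heq⟩ := hmin i
  set w := wfAt X₀ ρ ↑i with hw
  set r := ρ.get i with hr
  have hsucc : wfAt X₀ ρ (↑i+1) = wfUpdate w r := by
    have := wfAt_succ X₀ ρ ↑i i.2
    exact this
  have hrep : r ∈ Sym.replicate k r := by
    rw [Sym.mem_replicate]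
    exact ⟨hk.ne', rfl⟩
  rw [heq]
  have h1 : sInf { c : ℝ | ∃ Y : Conf M k, r ∈ Y ∧
      c = wfAt X₀ ρ (↑i+1) Y + confDist (Xs ↑i) Y } ≤ wfUpdate w r (Xs ↑i) := by
    refine le_csInf ⟨w (Sym.replicate k r) + confDist (Xs ↑i) (Sym.replicate k r),
      Sym.replicate k r, hrep, rfl⟩ ?_
    rintro c ⟨Y, hY, rfl⟩
    have h2 : sInf { c : ℝ | ∃ Y : Conf M k, r ∈ Y ∧
        c = wfAt X₀ ρ (↑i+1) Y + confDist (Xs ↑i) Y } ≤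
        wfAt X₀ ρ (↑i+1) Y + confDist (Xs ↑i) Y :=
      csInf_le (bddBelow_aux (fun Y => wfAt X₀ ρ (↑i+1) Y + confDist (Xs ↑i) Y)
        (fun Y => r ∈ Y)) ⟨Y, hY, rfl⟩
    have h3 : wfAt X₀ ρ (↑i+1) Y ≤ w Y := by
      rw [hsucc]
      exact wfUpdate_le_self w r Y hY
    linarith
  have h4 := sub_le_extCost w r (Xs ↑i)
  linarith

end AuxLemmas

/-- For every initial configuration, request sequence and WFA trajectory,
`OPT(ρ) + WFA(ρ) ≤ Σ_{i=0}^{t-1} ∇(w_i, r_{i+1})`. -/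
theorem opt_add_wfa_le_sum_extCost {M : Type*} [Fintype M] [MetricSpace M]
    {k : ℕ} (hk : 0 < k) (X₀ : Conf M k) (ρ : List M) (Xs : ℕ → Conf M k)
    (hXs : IsWFATrajectory X₀ ρ Xs) :
    OPTCost X₀ ρ + WFACost ρ Xs ≤
      ∑ i : Fin ρ.length, extCost (wfAt X₀ ρ ↑i) (ρ.get i) := by
  classical
  set t := ρ.length with ht
  set F : ℕ → ℝ := fun j =>
    if h : j < ρ.length then extCost (wfAt X₀ ρ j) (ρ.get ⟨j, h⟩) else 0 with hF
  have key : ∀ n, n ≤ ρ.length →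
      wfAt X₀ ρ n (Xs n) + ∑ i ∈ Finset.range n, confDist (Xs i) (Xs (i+1)) ≤
        ∑ i ∈ Finset.range n, F i := by
    intro n
    induction n with
    | zero =>
      intro _
      simp [wfAt, initWF, hXs.1, confDist_self]
    | succ n ih =>
      intro hn1
      have hn : n < ρ.length := hn1
      rw [Finset.sum_range_succ, Finset.sum_range_succ]
      have hFn : F n = extCost (wfAt X₀ ρ n) (ρ.get ⟨n, hn⟩) := by
        rw [hF]; exact dif_pos hn
      have hstep := wfa_step hk X₀ ρ Xs hXs ⟨n, hn⟩
      simp only [] at hstep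
      have hih := ih hn.le
      rw [hFn]
      linarith
  have hfin := key ρ.length le_rfl
  have hOPT : OPTCost X₀ ρ ≤ wfAt X₀ ρ ρ.length (Xs ρ.length) := by
    haveI := Classical.decEq M
    refine csInf_le (Set.Finite.bddBelow (Set.finite_range _)) ⟨Xs ρ.length, rfl⟩
  have hWFA : WFACost ρ Xs = ∑ i ∈ Finset.range ρ.length, confDist (Xs i) (Xs (i+1)) := by
    rw [WFACost, Finset.sum_range]
  have hRHS : ∑ i : Fin ρ.length, extCost (wfAt X₀ ρ ↑i) (ρ.get i) =
      ∑ i ∈ Finset.range ρ.length, F i := by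
    rw [Finset.sum_range]
    refine Finset.sum_congr rfl ?_
    intro i _
    rw [hF]
    simp only [Fin.is_lt, dif_pos, Fin.eta]
  rw [hWFA, hRHS]
  linarith
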